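/- For every integer q ≥ 1 there exist a 3-cycle graph G over n = 6q + 9 agents (with uniform node weights w(v) = |α(v)|), an (E,q)-locally optimal independent set I in G, and an independent set O in G, such that w(I) = 3(q+1) and w(O) = 3(2q+3); consequently w(O)/w(I) = 2 + 1/(q+1) = k − 1 + 1/(q+1) for k = 3, showing that the (k − 1 + 1/q)-approximation analysis of (E,q)-local optimality is nearly tight. -/

import Mathlib

/-!
The `k`-cycle graph framework of Emek–Shpiro, "Barter Exchange with Bounded
Trading Cycles": a `k`-cycle graph over `n` agents is a finite simple graph whose
nodes `v` are labeled by agent sets `α(v) ⊆ [n]` with `2 ≤ |α(v)| ≤ k`, two distinct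
nodes being adjacent iff their labels intersect.
-/

open Finset

/-- A `k`-cycle graph over `n` agents. -/
structure CycleGraph (n k : ℕ) where
  /-- the node set -/
  V : Type
  fintypeV : Fintype V
  decEqV : DecidableEq V
  /-- the agent label of each node -/
  alpha : V → Finset (Fin n)
  two_le_card : ∀ v, 2 ≤ (alpha v).card
  card_le_k : ∀ v, (alpha v).card ≤ k

attribute [instance] CycleGraph.fintypeV CycleGraph.decEqV

namespace CycleGraph

variable {n k : ℕ}

/-- Adjacency: distinct nodes whose agent labels intersect. -/
def Adj (G : CycleGraph n k) (u v : G.V) : Prop :=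
  u ≠ v ∧ ((G.alpha u) ∩ (G.alpha v)).Nonempty

instance (G : CycleGraph n k) : DecidableRel G.Adj := fun u v =>
  inferInstanceAs (Decidable (u ≠ v ∧ ((G.alpha u) ∩ (G.alpha v)).Nonempty))

/-- Independent set: pairwise non-adjacent nodes, i.e., pairwise disjoint labels. -/
def Indep (G : CycleGraph n k) (I : Finset G.V) : Prop :=
  ∀ u ∈ I, ∀ v ∈ I, u ≠ v → G.alpha u ∩ G.alpha v = ∅

instance (G : CycleGraph n k) (I : Finset G.V) : Decidable (G.Indep I) :=
  inferInstanceAs (Decidable (∀ u ∈ I, ∀ v ∈ I, u ≠ v → G.alpha u ∩ G.alpha v = ∅))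

end CycleGraph

/-- The (closed-out) neighborhood `N_G(U)`: all nodes adjacent to some node of `U`. -/
def CycleGraph.nbhd {n k : ℕ} (G : CycleGraph n k) (U : Finset G.V) : Finset G.V :=
  Finset.univ.filter (fun v => ∃ u ∈ U, G.Adj u v)

/-- `α(U) = ⋃_{v∈U} α(v)`. -/
def CycleGraph.aset {n k : ℕ} (G : CycleGraph n k) (U : Finset G.V) : Finset (Fin n) :=
  U.biUnion G.alpha

/-- An independent set `I` is `(E,q)`-locally optimal if (i) it is a maximal independent
set, and (ii) there is no independent set `X ⊆ N_G(I)` with `|N_G(X) ∩ I| ≤ q` such that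
`I′ = (I ∪ X) ∖ (N_G(X) ∩ I)` is an independent set with `α(I) ⊊ α(I′)`.  (The output of
the local search algorithm `LS_q` is exactly such an independent set.) -/
def CycleGraph.EqLocalOpt {n k : ℕ} (G : CycleGraph n k) (q : ℕ)
    (I : Finset G.V) : Prop :=
  G.Indep I ∧
  (∀ v : G.V, G.Indep (insert v I) → v ∈ I) ∧
  ¬ ∃ X : Finset G.V, X ⊆ G.nbhd I ∧ G.Indep X ∧ (G.nbhd X ∩ I).card ≤ q ∧
      G.Indep ((I ∪ X) \ (G.nbhd X ∩ I)) ∧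
      G.aset I ⊂ G.aset ((I ∪ X) \ (G.nbhd X ∩ I))

section TightConstruction

/-- The label function for the tight example: `q+1` "I-nodes" and `2q+3` "O-nodes". -/
def alphaF (q : ℕ) : (Fin (q + 1) ⊕ Fin (2 * q + 3)) → Finset (Fin (6 * q + 9)) :=
  Sum.elim
    (fun i => {⟨6 * i, by have := i.isLt; omega⟩, ⟨6 * i + 3, by have := i.isLt; omega⟩,
               ⟨6 * i + 7, by have := i.isLt; omega⟩})
    (fun j => {⟨3 * j, by have := j.isLt; omega⟩, ⟨3 * j + 1, by have := j.isLt; omega⟩,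
               ⟨3 * j + 2, by have := j.isLt; omega⟩})

lemma mem_alphaF_inl (q : ℕ) (i : Fin (q + 1)) (a : Fin (6 * q + 9)) :
    a ∈ alphaF q (.inl i) ↔ (a.val = 6 * i ∨ a.val = 6 * i + 3 ∨ a.val = 6 * i + 7) := by
  simp [alphaF, Fin.ext_iff]

lemma mem_alphaF_inr (q : ℕ) (j : Fin (2 * q + 3)) (a : Fin (6 * q + 9)) :
    a ∈ alphaF q (.inr j) ↔ (a.val = 3 * j ∨ a.val = 3 * j + 1 ∨ a.val = 3 * j + 2) := by
  simp [alphaF, Fin.ext_iff]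

lemma card_alphaF (q : ℕ) (v : Fin (q + 1) ⊕ Fin (2 * q + 3)) : (alphaF q v).card = 3 := by
  rcases v with i | j <;>
  · simp only [alphaF, Sum.elim_inl, Sum.elim_inr]
    rw [Finset.card_insert_of_notMem (by simp [Fin.ext_iff]),
        Finset.card_insert_of_notMem (by simp [Fin.ext_iff]),
        Finset.card_singleton]

/-- The tight-example `3`-cycle graph over `6q+9` agents. -/
def Gq (q : ℕ) : CycleGraph (6 * q + 9) 3 where
  V := Fin (q + 1) ⊕ Fin (2 * q + 3)
  fintypeV := inferInstance
  decEqV := inferInstance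
  alpha := alphaF q
  two_le_card v := by rw [card_alphaF]; omega
  card_le_k v := by rw [card_alphaF]

lemma Gq_alpha (q : ℕ) : (Gq q).alpha = alphaF q := rfl

/-- The locally optimal independent set: all I-nodes. -/
def Iq (q : ℕ) : Finset (Gq q).V := Finset.univ.map ⟨Sum.inl, Sum.inl_injective⟩

/-- The optimal independent set: all O-nodes. -/
def Oq (q : ℕ) : Finset (Gq q).V := Finset.univ.map ⟨Sum.inr, Sum.inr_injective⟩

lemma mem_Iq (q : ℕ) (v : (Gq q).V) : v ∈ Iq q ↔ ∃ i, Sum.inl i = v := by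
  simp [Iq]; exact Iff.rfl

/-- Every O-node shares an agent with some I-node. -/
lemma exists_common (q : ℕ) (j : Fin (2 * q + 3)) :
    ∃ (i : Fin (q + 1)) (a : Fin (6 * q + 9)),
      a ∈ alphaF q (.inl i) ∧ a ∈ alphaF q (.inr j) := by
  have hj := j.isLt
  have : ∃ (i a : ℕ), i < q + 1 ∧ (a = 6 * i ∨ a = 6 * i + 3 ∨ a = 6 * i + 7) ∧
      (a = 3 * j.val ∨ a = 3 * j.val + 1 ∨ a = 3 * j.val + 2) := by
    rcases Nat.even_or_odd j.val with ⟨c, hc⟩ | ⟨c, hc⟩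
    · by_cases h2 : c ≤ q
      · exact ⟨c, 6 * c, by omega, by omega, by omega⟩
      · exact ⟨q, 6 * q + 7, by omega, by omega, by omega⟩
    · exact ⟨c, 6 * c + 3, by omega, by omega, by omega⟩
  obtain ⟨i, a, hi, h1, h2⟩ := this
  exact ⟨⟨i, hi⟩, ⟨a, by omega⟩, by rw [mem_alphaF_inl]; exact h1,
    by rw [mem_alphaF_inr]; exact h2⟩

lemma indep_Iq (q : ℕ) : (Gq q).Indep (Iq q) := by
  intro u hu v hv huv
  rw [mem_Iq] at hu hv
  obtain ⟨i, rfl⟩ := hu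
  obtain ⟨i', rfl⟩ := hv
  have hne : i.val ≠ i'.val := fun h => huv (congrArg Sum.inl (Fin.ext h))
  rw [Finset.eq_empty_iff_forall_notMem]
  intro a ha
  simp only [Finset.mem_inter, Gq_alpha, mem_alphaF_inl] at ha
  omega

lemma indep_Oq (q : ℕ) : (Gq q).Indep (Oq q) := by
  intro u hu v hv huv
  simp only [Oq, Finset.mem_map, Finset.mem_univ, Function.Embedding.coeFn_mk,
    true_and] at hu hv
  obtain ⟨j, rfl⟩ := hu
  obtain ⟨j', rfl⟩ := hv
  have hne : j.val ≠ j'.val := fun h => huv (congrArg Sum.inr (Fin.ext h))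
  show (Gq q).alpha (Sum.inr j) ∩ (Gq q).alpha (Sum.inr j') = ∅
  rw [Finset.eq_empty_iff_forall_notMem]
  intro a ha
  simp only [Finset.mem_inter, Gq_alpha, mem_alphaF_inr] at ha
  omega

lemma maximal_Iq (q : ℕ) : ∀ v : (Gq q).V, (Gq q).Indep (insert v (Iq q)) → v ∈ Iq q := by
  intro v hv
  rcases v with i | j
  · exact (mem_Iq q _).mpr ⟨i, rfl⟩
  · exfalso
    obtain ⟨i, a, h1, h2⟩ := exists_common q j
    have hmem : (Sum.inl i : (Gq q).V) ∈ insert (Sum.inr j) (Iq q) :=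
      Finset.mem_insert_of_mem ((mem_Iq q _).mpr ⟨i, rfl⟩)
    have hd := hv (Sum.inr j) (Finset.mem_insert_self _ _) (Sum.inl i) hmem Sum.inr_ne_inl
    have : a ∈ ((Gq q).alpha (Sum.inr j) ∩ (Gq q).alpha (Sum.inl i)) :=
      Finset.mem_inter.mpr ⟨h2, h1⟩
    rw [hd] at this
    simp at this

lemma no_improve (q : ℕ) (hq : 1 ≤ q) :
    ¬ ∃ X : Finset (Gq q).V, X ⊆ (Gq q).nbhd (Iq q) ∧ (Gq q).Indep X ∧
      ((Gq q).nbhd X ∩ (Iq q)).card ≤ q ∧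
      (Gq q).Indep (((Iq q) ∪ X) \ ((Gq q).nbhd X ∩ (Iq q))) ∧
      (Gq q).aset (Iq q) ⊂ (Gq q).aset (((Iq q) ∪ X) \ ((Gq q).nbhd X ∩ (Iq q))) := by
  rintro ⟨X, hXN, -, hYcard, -, hss⟩
  set Y := (Gq q).nbhd X ∩ Iq q with hY
  have mem_nbhd : ∀ (U : Finset (Gq q).V) (v : (Gq q).V),
      v ∈ (Gq q).nbhd U ↔ ∃ u ∈ U, u ≠ v ∧ ((Gq q).alpha u ∩ (Gq q).alpha v).Nonempty := by
    intro U v; exact ⟨fun h => (Finset.mem_filter.mp h).2, fun h => Finset.mem_filter.mpr ⟨Finset.mem_univ _, h⟩⟩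
  -- X consists only of O-nodes
  have hXO : ∀ v ∈ X, ∃ j, v = Sum.inr j := by
    intro v hv
    rcases v with i | j
    · exfalso
      have h := (mem_nbhd _ _).mp (hXN hv)
      obtain ⟨u, hu, hne, a, ha⟩ := h
      obtain ⟨i', rfl⟩ := (mem_Iq q u).mp hu
      have hne' : i'.val ≠ i.val := fun h => hne (congrArg Sum.inl (Fin.ext h))
      simp only [Finset.mem_inter, Gq_alpha, mem_alphaF_inl] at ha
      omega
    · exact ⟨j, rfl⟩
  -- X is nonempty
  have hXne : X.Nonempty := by
    rw [Finset.nonempty_iff_ne_empty]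
    intro hXe
    have h1 : (Gq q).nbhd (∅ : Finset (Gq q).V) = ∅ := by
      simp [CycleGraph.nbhd]
    have hYe : Y = ∅ := by rw [hY, hXe, h1]; simp
    rw [hXe, hYe] at hss
    simp only [Finset.union_empty, Finset.sdiff_empty] at hss
    exact ssubset_irrefl _ hss
  -- membership of a common agent puts the I-node in Y
  have addY : ∀ (j : Fin (2 * q + 3)) (i : Fin (q + 1)) (a : Fin (6 * q + 9)),
      Sum.inr j ∈ X → a ∈ alphaF q (.inl i) → a ∈ alphaF q (.inr j) → Sum.inl i ∈ Y := by
    intro j i a hjX hai haj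
    refine Finset.mem_inter.mpr ⟨?_, (mem_Iq q _).mpr ⟨i, rfl⟩⟩
    refine (mem_nbhd _ _).mpr ?_
    exact ⟨Sum.inr j, hjX, Sum.inr_ne_inl, ⟨a, Finset.mem_inter.mpr ⟨haj, hai⟩⟩⟩
  -- key: if an I-node is removed, all O-nodes covering its agents are in X
  have key : ∀ i : Fin (q + 1), Sum.inl i ∈ Y → ∀ a : Fin (6 * q + 9),
      a ∈ alphaF q (.inl i) → ∃ j : Fin (2 * q + 3), Sum.inr j ∈ X ∧ a ∈ alphaF q (.inr j) := by
    intro i hiY a ha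
    have haI : a ∈ (Gq q).aset (Iq q) :=
      Finset.mem_biUnion.mpr ⟨Sum.inl i, (mem_Iq q _).mpr ⟨i, rfl⟩, ha⟩
    have haI' := hss.subset haI
    obtain ⟨w, hw, haw⟩ := Finset.mem_biUnion.mp haI'
    rw [Finset.mem_sdiff] at hw
    obtain ⟨hw1, hw2⟩ := hw
    rcases w with i' | j
    · exfalso
      have hi' : i' = i := by
        rw [mem_alphaF_inl] at ha
        simp only [Gq_alpha, mem_alphaF_inl] at haw
        exact Fin.ext (by omega)
      subst hi'
      exact hw2 hiY
    · refine ⟨j, ?_, haw⟩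
      rcases Finset.mem_union.mp hw1 with h | h
      · exfalso; obtain ⟨i'', h⟩ := (mem_Iq q _).mp h; exact Sum.inl_ne_inr h
      · exact h
  -- propagation up the chain
  have up : ∀ (i : ℕ) (h : i + 1 ≤ q),
      Sum.inl (⟨i, by omega⟩ : Fin (q + 1)) ∈ Y →
      Sum.inl (⟨i + 1, by omega⟩ : Fin (q + 1)) ∈ Y := by
    intro i h hi
    obtain ⟨j, hjX, hja⟩ := key ⟨i, by omega⟩ hi ⟨6 * i + 7, by omega⟩
      (by rw [mem_alphaF_inl]; right; right; rfl)
    rw [mem_alphaF_inr] at hja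
    have hja' : 6 * i + 7 = 3 * j.val ∨ 6 * i + 7 = 3 * j.val + 1 ∨
        6 * i + 7 = 3 * j.val + 2 := hja
    refine addY j ⟨i + 1, by omega⟩ ⟨6 * i + 6, by omega⟩ hjX ?_ ?_
    · rw [mem_alphaF_inl]; left; exact show 6 * i + 6 = 6 * (i + 1) by omega
    · rw [mem_alphaF_inr]; left; exact show 6 * i + 6 = 3 * j.val by omega
  -- propagation down the chain
  have down : ∀ (i : ℕ) (h : i + 1 ≤ q),
      Sum.inl (⟨i + 1, by omega⟩ : Fin (q + 1)) ∈ Y →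
      Sum.inl (⟨i, by omega⟩ : Fin (q + 1)) ∈ Y := by
    intro i h hi
    obtain ⟨j, hjX, hja⟩ := key ⟨i + 1, by omega⟩ hi ⟨6 * (i + 1), by omega⟩
      (by rw [mem_alphaF_inl]; left; rfl)
    rw [mem_alphaF_inr] at hja
    have hja' : 6 * (i + 1) = 3 * j.val ∨ 6 * (i + 1) = 3 * j.val + 1 ∨
        6 * (i + 1) = 3 * j.val + 2 := hja
    refine addY j ⟨i, by omega⟩ ⟨6 * i + 7, by omega⟩ hjX ?_ ?_
    · rw [mem_alphaF_inl]; right; right; rfl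
    · rw [mem_alphaF_inr]; right; left; exact show 6 * i + 7 = 3 * j.val + 1 by omega
  -- some I-node is in Y
  obtain ⟨v0, hv0⟩ := hXne
  obtain ⟨j0, rfl⟩ := hXO v0 hv0
  obtain ⟨i0, a0, h1, h2⟩ := exists_common q j0
  have hi0 : Sum.inl i0 ∈ Y := addY j0 i0 a0 hv0 h1 h2
  -- hence node 0 is in Y
  have dn : ∀ (i : ℕ) (h : i < q + 1), Sum.inl (⟨i, h⟩ : Fin (q + 1)) ∈ Y →
      Sum.inl (⟨0, by omega⟩ : Fin (q + 1)) ∈ Y := by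
    intro i
    induction i with
    | zero => intro h hy; exact hy
    | succ i ih => intro h hy; exact ih (by omega) (down i (by omega) hy)
  have h0 : Sum.inl (⟨0, by omega⟩ : Fin (q + 1)) ∈ Y := dn i0.val i0.isLt hi0
  -- hence all I-nodes are in Y
  have allY : ∀ (i : ℕ) (h : i < q + 1), Sum.inl (⟨i, h⟩ : Fin (q + 1)) ∈ Y := by
    intro i
    induction i with
    | zero => intro h; exact h0
    | succ i ih => intro h; exact up i (by omega) (ih (by omega))
  have hsub : Iq q ⊆ Y := by
    intro v hv
    obtain ⟨i, rfl⟩ := (mem_Iq q v).mp hv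
    exact allY i.val i.isLt
  have hcard : q + 1 ≤ Y.card := by
    have hc : (Iq q).card = q + 1 := by simp [Iq]
    calc q + 1 = (Iq q).card := hc.symm
    _ ≤ Y.card := Finset.card_le_card hsub
  omega

end TightConstruction

/-- The analysis of `LS_q` is nearly tight.  For every `q ≥ 1` there
exist a `3`-cycle graph `G` over `n = 6q + 9` agents, an `(E,q)`-locally optimal
independent set `I` of weight `w(I) = 3(q+1)`, and an independent set `O` of weight
`w(O) = 3(2q+3)` (uniform weights `w(v) = |α(v)|`); consequently
`w(O)/w(I) = 2 + 1/(q+1) = k − 1 + 1/(q+1)` for `k = 3`. -/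
theorem eqLocalOpt_nearly_tight (q : ℕ) (hq : 1 ≤ q) :
    ∃ (G : CycleGraph (6 * q + 9) 3) (I O : Finset G.V),
      G.EqLocalOpt q I ∧ G.Indep O ∧
      (∑ v ∈ I, (G.alpha v).card) = 3 * (q + 1) ∧
      (∑ v ∈ O, (G.alpha v).card) = 3 * (2 * q + 3) ∧
      (∑ v ∈ O, ((G.alpha v).card : ℝ)) / (∑ v ∈ I, ((G.alpha v).card : ℝ))
        = 2 + 1 / ((q : ℝ) + 1) := by
  classical
  have sumI : (∑ v ∈ Iq q, ((Gq q).alpha v).card) = 3 * (q + 1) := by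
    rw [Iq, Finset.sum_map]
    simp [Gq_alpha, card_alphaF, Finset.sum_const, Finset.card_univ, mul_comm]
    exact (Finset.sum_congr rfl fun x _ => card_alphaF q _).trans (by rw [Finset.sum_const, Finset.card_univ, Fintype.card_fin, smul_eq_mul])
  have sumO : (∑ v ∈ Oq q, ((Gq q).alpha v).card) = 3 * (2 * q + 3) := by
    rw [Oq, Finset.sum_map]
    simp [Gq_alpha, card_alphaF, Finset.sum_const, Finset.card_univ, mul_comm]
    exact (Finset.sum_congr rfl fun x _ => card_alphaF q _).trans (by rw [Finset.sum_const, Finset.card_univ, Fintype.card_fin, smul_eq_mul]; ring)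
  refine ⟨Gq q, Iq q, Oq q, ⟨indep_Iq q, maximal_Iq q, no_improve q hq⟩, indep_Oq q,
    sumI, sumO, ?_⟩
  have c1 : (∑ v ∈ Oq q, (((Gq q).alpha v).card : ℝ)) = 3 * (2 * (q : ℝ) + 3) := by
    rw [← Nat.cast_sum, sumO]; push_cast; ring
  have c2 : (∑ v ∈ Iq q, (((Gq q).alpha v).card : ℝ)) = 3 * ((q : ℝ) + 1) := by
    rw [← Nat.cast_sum, sumI]; push_cast; ring
  rw [c1, c2]
  have hq1 : (q : ℝ) + 1 ≠ 0 := by positivity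
  field_simp
  ring
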